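/- Let (X, 𝓑) be a primitive uniform space and let F : X → 2^X be a multivalued mapping with nonempty values such that for every x ∈ X the centre c_𝓑(F(x)) is a singleton contained in F(x). Define f : X → X by letting f(x) be the unique element of c_𝓑(F(x)), and assume f is nonexpansive. Assume Y ⊆ X is nonempty, f(Y) ⊆ Y, and x ∈ c_𝓑(f, Y). Then f(x) ∈ c_𝓑(f, Y); moreover, if c_𝓑(f, Y) is a singleton, then x ∈ F(x), i.e. x is a fixed point of F. -/

import Mathlib

/-- For an entourage `B ⊆ X × X` and `x : X`, `entBall B x = {y | (x, y) ∈ B}`. -/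
def entBall {X : Type*} (B : Set (X × X)) (x : X) : Set X := {y | (x, y) ∈ B}

/-- `f : X → X` is nonexpansive w.r.t. `𝓑` if `f(B(x)) ⊆ B(f(x))` for all `x` and `B ∈ 𝓑`. -/
def Nonexpansive {X : Type*} (𝓑 : Set (Set (X × X))) (f : X → X) : Prop :=
  ∀ x : X, ∀ B ∈ 𝓑, f '' entBall B x ⊆ entBall B (f x)

/-- The centre `c_𝓑(A)` of a set `A ⊆ X`. -/
def centreSet {X : Type*} (𝓑 : Set (Set (X × X))) (A : Set X) : Set X :=
  {x | ⋂₀ {B ∈ 𝓑 | ∃ z : X, A ⊆ entBall B z} = ⋂₀ {B ∈ 𝓑 | A ⊆ entBall B x}}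

/-- The centre `c_𝓑(f, Y)` of a mapping `f : X → X` on `Y ⊆ X`. -/
def centreMap {X : Type*} (𝓑 : Set (Set (X × X))) (f : X → X) (Y : Set X) : Set X :=
  {x | ⋂₀ {B ∈ 𝓑 | ∃ n : ℕ, ∃ z : X, f^[n] '' Y ⊆ entBall B z} =
       ⋂₀ {B ∈ 𝓑 | ∃ n : ℕ, f^[n] '' Y ⊆ entBall B x}}

/-- Theorem 8: let `(X, 𝓑)` be a primitive uniform space and `F : X → 2^X`
multivalued with nonempty values such that each `c_𝓑(F(x))` is a singleton `{f x}` contained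
in `F(x)`, with `f` nonexpansive. If `Y ⊆ X` is nonempty, `f(Y) ⊆ Y` and `x ∈ c_𝓑(f, Y)`,
then `f(x) ∈ c_𝓑(f, Y)`; and if `c_𝓑(f, Y)` is a singleton, then `x ∈ F(x)`. -/
theorem stmt3 {X : Type*} [Nonempty X] (𝓑 : Set (Set (X × X)))
    (hUniv : (Set.univ : Set (X × X)) ∈ 𝓑)
    (F : X → Set X) (hFne : ∀ x, (F x).Nonempty)
    (f : X → X) (hfc : ∀ x, centreSet 𝓑 (F x) = {f x}) (hfF : ∀ x, f x ∈ F x)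
    (hf : Nonexpansive 𝓑 f)
    (Y : Set X) (hY : Y.Nonempty) (hfY : f '' Y ⊆ Y)
    (x : X) (hx : x ∈ centreMap 𝓑 f Y) :
    f x ∈ centreMap 𝓑 f Y ∧
      ((∃ w, centreMap 𝓑 f Y = {w}) → x ∈ F x) := by
  have key : f x ∈ centreMap 𝓑 f Y := by
    simp only [centreMap, Set.mem_setOf_eq] at hx ⊢
    have hsub : {B ∈ 𝓑 | ∃ n : ℕ, f^[n] '' Y ⊆ entBall B x} ⊆
        {B ∈ 𝓑 | ∃ n : ℕ, f^[n] '' Y ⊆ entBall B (f x)} := by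
      rintro B ⟨hB, n, hn⟩
      refine ⟨hB, n + 1, ?_⟩
      rw [Function.iterate_succ', Set.image_comp]
      exact (Set.image_mono (f := f) hn).trans (hf x B hB)
    refine Set.Subset.antisymm ?_ ?_
    · refine Set.sInter_subset_sInter ?_
      rintro B ⟨hB, n, hn⟩
      exact ⟨hB, n, f x, hn⟩
    · calc ⋂₀ {B ∈ 𝓑 | ∃ n : ℕ, f^[n] '' Y ⊆ entBall B (f x)}
          ⊆ ⋂₀ {B ∈ 𝓑 | ∃ n : ℕ, f^[n] '' Y ⊆ entBall B x} :=
            Set.sInter_subset_sInter hsub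
        _ = _ := hx.symm
  refine ⟨key, ?_⟩
  rintro ⟨w, hw⟩
  have h1 : x = w := by rw [hw] at hx; exact hx
  have h2 : f x = w := by rw [hw] at key; exact key
  have : x = f x := h1.trans h2.symm
  have h3 := hfF x
  rw [← this] at h3
  exact h3
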